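/- Let L be an even lattice and G ≤ O^#(L) a finite subgroup of stable isometries, i.e., isometries acting trivially on the discriminant group D_L = L^∨/L. Then G is stably saturated (meaning G equals the subgroup of O^#(L) fixing the invariant sublattice L^G pointwise) if and only if the image of the restriction map G → O(L_G) equals O^#(L_G), where L_G = (L^G)^⊥ is the coinvariant sublattice. -/

import Mathlib

section

variable {V : Type*} [AddCommGroup V] [Module ℚ V]

/-- The dual lattice `L^∨ ⊆ L ⊗ ℚ = V`, as a set. -/
def dualSet (B : V →ₗ[ℚ] V →ₗ[ℚ] ℚ) (L : Submodule ℤ V) : Set V :=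
  {x | ∀ l ∈ L, ∃ n : ℤ, B x l = (n : ℚ)}

/-- The invariant sublattice `L^G`, as a set. -/
def fixSet (L : Submodule ℤ V) (G : Subgroup (V ≃ₗ[ℚ] V)) : Set V :=
  {v | v ∈ L ∧ ∀ g ∈ G, (g : V ≃ₗ[ℚ] V) v = v}

/-- The coinvariant sublattice `L_G = (L^G)^⊥ ∩ L`, as a set. -/
def coSet (B : V →ₗ[ℚ] V →ₗ[ℚ] ℚ) (L : Submodule ℤ V)
    (G : Subgroup (V ≃ₗ[ℚ] V)) : Set V :=
  {v | v ∈ L ∧ ∀ w ∈ fixSet L G, B v w = 0}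

/-- The dual lattice of the coinvariant lattice `L_G`, inside its rational span. -/
def coDualSet (B : V →ₗ[ℚ] V →ₗ[ℚ] ℚ) (L : Submodule ℤ V)
    (G : Subgroup (V ≃ₗ[ℚ] V)) : Set V :=
  {x | x ∈ Submodule.span ℚ (coSet B L G) ∧ ∀ l ∈ coSet B L G, ∃ n : ℤ, B x l = (n : ℚ)}

end
section lemmas
variable {V : Type*} [AddCommGroup V] [Module ℚ V]

/-- If `B v` vanishes on `s`, it vanishes on the `ℚ`-span of `s`. -/
lemma perp_span (B : V →ₗ[ℚ] V →ₗ[ℚ] ℚ) {v : V} {s : Set V}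
    (h : ∀ w ∈ s, B v w = 0) : ∀ w ∈ Submodule.span ℚ s, B v w = 0 := by
  intro w hw
  have hle : Submodule.span ℚ s ≤ LinearMap.ker (B v) :=
    Submodule.span_le.mpr fun x hx => LinearMap.mem_ker.mpr (h x hx)
  exact hle hw

/-- Two linear maps agreeing on `s` agree on its span. -/
lemma agree_on_span (f g : V →ₗ[ℚ] V) (s : Set V) (h : ∀ w ∈ s, f w = g w) :
    ∀ v ∈ Submodule.span ℚ s, f v = g v := by
  intro v hv
  have hle : Submodule.span ℚ s ≤ LinearMap.ker (f - g) :=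
    Submodule.span_le.mpr fun w hw => LinearMap.mem_ker.mpr
      (by rw [LinearMap.sub_apply, h w hw, sub_self])
  have := hle hv
  rw [LinearMap.mem_ker, LinearMap.sub_apply, sub_eq_zero] at this
  exact this

/-- Denominator clearing. -/
lemma clearDenom (S : Submodule ℤ V) (hS : Submodule.span ℚ (S : Set V) = ⊤) (v : V) :
    ∃ N : ℕ, 0 < N ∧ (N : ℚ) • v ∈ S := by
  let T : Submodule ℚ V :=
    { carrier := {v | ∃ N : ℕ, 0 < N ∧ (N : ℚ) • v ∈ S}
      zero_mem' := ⟨1, one_pos, by simp⟩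
      add_mem' := by
        rintro a b ⟨N, hN, hNa⟩ ⟨M, hM, hMb⟩
        refine ⟨N * M, Nat.mul_pos hN hM, ?_⟩
        have h1 : ((N * M : ℕ) : ℚ) • (a + b)
            = ((M : ℤ) : ℚ) • ((N : ℚ) • a) + ((N : ℤ) : ℚ) • ((M : ℚ) • b) := by
          rw [smul_add, smul_smul, smul_smul]; push_cast; ring_nf
        rw [h1, Int.cast_smul_eq_zsmul, Int.cast_smul_eq_zsmul]
        exact S.add_mem (S.smul_mem _ hNa) (S.smul_mem _ hMb)
      smul_mem' := by
        rintro q a ⟨N, hN, hNa⟩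
        refine ⟨N * q.den, Nat.mul_pos hN q.den_pos, ?_⟩
        have h1 : ((N * q.den : ℕ) : ℚ) • (q • a) = (q.num : ℚ) • ((N : ℚ) • a) := by
          rw [smul_smul, smul_smul]
          congr 1
          push_cast
          rw [mul_assoc, mul_comm ((q.den : ℚ)) q, Rat.mul_den_eq_num, mul_comm]
        rw [h1, Int.cast_smul_eq_zsmul]
        exact S.smul_mem _ hNa }
  have hsub : (S : Set V) ⊆ T := fun x hx => ⟨1, one_pos, by simpa using hx⟩
  have : Submodule.span ℚ (S : Set V) ≤ T := Submodule.span_le.mpr hsub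
  rw [hS] at this
  exact this trivial

end lemmas
section avg
variable {V : Type*} [AddCommGroup V] [Module ℚ V]

/-- Averaging operator over a finite subgroup `G`. -/
noncomputable def avgG (G : Subgroup (V ≃ₗ[ℚ] V)) [Fintype G] : V →ₗ[ℚ] V :=
  (Fintype.card G : ℚ)⁻¹ • ∑ g : G, ((g : V ≃ₗ[ℚ] V) : V →ₗ[ℚ] V)

variable (G : Subgroup (V ≃ₗ[ℚ] V)) [Fintype G]

lemma avgG_apply (v : V) :
    avgG G v = (Fintype.card G : ℚ)⁻¹ • ∑ g : G, (g : V ≃ₗ[ℚ] V) v := by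
  simp [avgG, LinearMap.sum_apply]

lemma cardG_ne : (Fintype.card G : ℚ) ≠ 0 := by
  have : Nonempty G := ⟨1⟩
  exact_mod_cast Fintype.card_ne_zero

lemma avgG_fixed {g : V ≃ₗ[ℚ] V} (hg : g ∈ G) (v : V) : g (avgG G v) = avgG G v := by
  rw [avgG_apply, map_smul]
  congr 1
  rw [map_sum]
  exact Fintype.sum_bijective (fun h : G => (⟨g, hg⟩ * h : G))
    (Group.mulLeft_bijective (⟨g, hg⟩ : G)) (fun h : G => g ((h : V ≃ₗ[ℚ] V) v))
    (fun h : G => (h : V ≃ₗ[ℚ] V) v) (fun h => rfl)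

lemma avgG_of_fixed {v : V} (hv : ∀ g ∈ G, (g : V ≃ₗ[ℚ] V) v = v) : avgG G v = v := by
  rw [avgG_apply]
  rw [Finset.sum_congr rfl (fun g _ => hv _ g.2)]
  rw [Finset.sum_const, Finset.card_univ, ← Nat.cast_smul_eq_nsmul ℚ, smul_smul,
    inv_mul_cancel₀ (cardG_ne G), one_smul]

lemma B_avgG (B : V →ₗ[ℚ] V →ₗ[ℚ] ℚ)
    (hGisom : ∀ g ∈ G, ∀ x y, B ((g : V ≃ₗ[ℚ] V) x) ((g : V ≃ₗ[ℚ] V) y) = B x y)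
    (v w : V) (hw : ∀ g ∈ G, (g : V ≃ₗ[ℚ] V) w = w) :
    B (avgG G v) w = B v w := by
  rw [avgG_apply, map_smul, LinearMap.smul_apply, map_sum, LinearMap.sum_apply]
  have : ∀ g : G, B ((g : V ≃ₗ[ℚ] V) v) w = B v w := by
    intro g
    rw [← hw g g.2, hGisom g g.2, hw g g.2]
  rw [Finset.sum_congr rfl (fun g _ => this g)]
  rw [Finset.sum_const, Finset.card_univ, ← Nat.cast_smul_eq_nsmul ℚ, smul_smul,
    inv_mul_cancel₀ (cardG_ne G), one_smul]

end avg

section core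
variable {V : Type*} [AddCommGroup V] [Module ℚ V]
variable (B : V →ₗ[ℚ] V →ₗ[ℚ] ℚ) (L : Submodule ℤ V) (G : Subgroup (V ≃ₗ[ℚ] V))

/-- A vector fixed by all of `G` lies in the `ℚ`-span of `fixSet`. -/
lemma mem_spanFix (hspan : Submodule.span ℚ (L : Set V) = ⊤) {v : V}
    (hv : ∀ g ∈ G, (g : V ≃ₗ[ℚ] V) v = v) : v ∈ Submodule.span ℚ (fixSet L G) := by
  obtain ⟨N, hN, hNv⟩ := clearDenom L hspan v
  have hfix : (N : ℚ) • v ∈ fixSet L G := by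
    refine ⟨hNv, fun g hg => ?_⟩
    rw [map_smul, hv g hg]
  have : ((N : ℚ)⁻¹ • ((N : ℚ) • v)) ∈ Submodule.span ℚ (fixSet L G) :=
    Submodule.smul_mem _ _ (Submodule.subset_span hfix)
  rwa [smul_smul, inv_mul_cancel₀ (by exact_mod_cast hN.ne'), one_smul] at this

/-- A vector orthogonal to `fixSet` lies in the `ℚ`-span of `coSet`. -/
lemma mem_spanCo (hspan : Submodule.span ℚ (L : Set V) = ⊤) {v : V}
    (hv : ∀ w ∈ fixSet L G, B v w = 0) : v ∈ Submodule.span ℚ (coSet B L G) := by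
  obtain ⟨N, hN, hNv⟩ := clearDenom L hspan v
  have hco : (N : ℚ) • v ∈ coSet B L G := by
    refine ⟨hNv, fun w hw => ?_⟩
    rw [map_smul, LinearMap.smul_apply, hv w hw, smul_zero]
  have : ((N : ℚ)⁻¹ • ((N : ℚ) • v)) ∈ Submodule.span ℚ (coSet B L G) :=
    Submodule.smul_mem _ _ (Submodule.subset_span hco)
  rwa [smul_smul, inv_mul_cancel₀ (by exact_mod_cast hN.ne'), one_smul] at this

/-- Elements of `coSet` are orthogonal to the span of `fixSet`. -/
lemma coSet_perp_spanFix {c : V} (hc : c ∈ coSet B L G) :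
    ∀ w ∈ Submodule.span ℚ (fixSet L G), B c w = 0 :=
  perp_span B hc.2

/-- Elements of the span of `coSet` are orthogonal to `fixSet`. -/
lemma spanCo_perp_fix (hsymm : ∀ x y, B x y = B y x) {v : V}
    (hv : v ∈ Submodule.span ℚ (coSet B L G)) :
    ∀ w ∈ fixSet L G, B v w = 0 := by
  intro w hw
  have : ∀ c ∈ coSet B L G, B w c = 0 := fun c hc => (hsymm w c).symm ▸ (hsymm c w ▸ hc.2 w hw)
  rw [hsymm]
  exact perp_span B this v hv

lemma spanCo_perp_spanFix (hsymm : ∀ x y, B x y = B y x) {v w : V}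
    (hv : v ∈ Submodule.span ℚ (coSet B L G))
    (hw : w ∈ Submodule.span ℚ (fixSet L G)) : B v w = 0 := by
  exact perp_span B (fun u hu => spanCo_perp_fix B L G hsymm hv u hu) w hw

variable [Fintype G]

/-- Decomposition: the average lies in span of `fixSet`, the rest in span of `coSet`. -/
lemma avg_mem_spanFix (hspan : Submodule.span ℚ (L : Set V) = ⊤) (v : V) :
    avgG G v ∈ Submodule.span ℚ (fixSet L G) :=
  mem_spanFix L G hspan (fun g hg => avgG_fixed G hg v)

lemma sub_avg_mem_spanCo (hsymm : ∀ x y, B x y = B y x)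
    (hspan : Submodule.span ℚ (L : Set V) = ⊤)
    (hGisom : ∀ g ∈ G, ∀ x y, B ((g : V ≃ₗ[ℚ] V) x) ((g : V ≃ₗ[ℚ] V) y) = B x y)
    (v : V) : v - avgG G v ∈ Submodule.span ℚ (coSet B L G) := by
  apply mem_spanCo B L G hspan
  intro w hw
  rw [map_sub, LinearMap.sub_apply, B_avgG G B hGisom v w (fun g hg => hw.2 g hg), sub_self]

/-- Nondegeneracy on the coinvariant part. -/
lemma vanish_spanCo (hsymm : ∀ x y, B x y = B y x)
    (hnondeg : ∀ x, (∀ y, B x y = 0) → x = 0)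
    (hspan : Submodule.span ℚ (L : Set V) = ⊤)
    (hGisom : ∀ g ∈ G, ∀ x y, B ((g : V ≃ₗ[ℚ] V) x) ((g : V ≃ₗ[ℚ] V) y) = B x y)
    {v : V} (hv : v ∈ Submodule.span ℚ (coSet B L G))
    (hperp : ∀ c ∈ coSet B L G, B v c = 0) : v = 0 := by
  apply hnondeg
  intro u
  have h1 : B v (avgG G u) = 0 :=
    spanCo_perp_spanFix B L G hsymm hv (avg_mem_spanFix L G hspan u)
  have h2 : B v (u - avgG G u) = 0 :=
    perp_span B hperp _ (sub_avg_mem_spanCo B L G hsymm hspan hGisom u)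
  have : B v u = B v (avgG G u) + B v (u - avgG G u) := by
    rw [map_sub]; ring
  rw [this, h1, h2, add_zero]

/-- A vector orthogonal to `coSet` equals its average. -/
lemma eq_avg_of_perp_coSet (hsymm : ∀ x y, B x y = B y x)
    (hnondeg : ∀ x, (∀ y, B x y = 0) → x = 0)
    (hspan : Submodule.span ℚ (L : Set V) = ⊤)
    (hGisom : ∀ g ∈ G, ∀ x y, B ((g : V ≃ₗ[ℚ] V) x) ((g : V ≃ₗ[ℚ] V) y) = B x y)
    {v : V} (hperp : ∀ c ∈ coSet B L G, B v c = 0) : v = avgG G v := by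
  have h0 : v - avgG G v = 0 := by
    apply vanish_spanCo B L G hsymm hnondeg hspan hGisom
      (sub_avg_mem_spanCo B L G hsymm hspan hGisom v)
    intro c hc
    have h1 : B (avgG G v) c = 0 := by
      rw [hsymm]
      exact coSet_perp_spanFix B L G hc _ (avg_mem_spanFix L G hspan v)
    rw [map_sub, LinearMap.sub_apply, hperp c hc, h1, sub_self]
  exact sub_eq_zero.mp h0
end core

section dualproj
variable {V : Type*} [AddCommGroup V] [Module ℚ V]
variable (B : V →ₗ[ℚ] V →ₗ[ℚ] ℚ) (L : Submodule ℤ V) (G : Subgroup (V ≃ₗ[ℚ] V))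
variable [Fintype G]

lemma exists_dual_preimage (hsymm : ∀ x y, B x y = B y x)
    (hnondeg : ∀ x, (∀ y, B x y = 0) → x = 0)
    (hfg : L.FG) (hspan : Submodule.span ℚ (L : Set V) = ⊤)
    (hGisom : ∀ g ∈ G, ∀ x y, B ((g : V ≃ₗ[ℚ] V) x) ((g : V ≃ₗ[ℚ] V) y) = B x y)
    {x : V} (hx : x ∈ coDualSet B L G) :
    ∃ y ∈ dualSet B L, x = y - avgG G y := by
  classical
  haveI : Module.Finite ℤ L := Module.Finite.iff_fg.mpr hfg
  haveI : Module.IsTorsionFree ℤ ↥L := Module.IsTorsionFree.of_smul_eq_zero fun r m h => by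
    have h' : ((r • m : ↥L) : V) = 0 := by rw [h]; rfl
    rw [Submodule.coe_smul, ← Int.cast_smul_eq_zsmul ℚ] at h'
    rcases smul_eq_zero.mp h' with h1 | h1
    · left; exact_mod_cast h1
    · right; exact Subtype.ext h1
  haveI : Module.Free ℤ ↥L := Module.free_of_finite_type_torsion_free'
  set Vc : Submodule ℚ V := Submodule.span ℚ (coSet B L G) with hVc
  set K : Submodule ℤ ↥L := Submodule.comap L.subtype (Vc.restrictScalars ℤ) with hKdef
  have hK : ∀ l : ↥L, l ∈ K ↔ (l : V) ∈ coSet B L G := by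
    intro l
    constructor
    · intro h
      exact ⟨l.2, fun w hw => spanCo_perp_fix B L G hsymm h w hw⟩
    · intro h
      exact Submodule.subset_span h
  haveI : NoZeroSMulDivisors ℤ (↥L ⧸ K) := by
    refine ⟨fun {c} {q} h => ?_⟩
    by_cases hc : c = 0
    · exact Or.inl hc
    · right
      obtain ⟨l, rfl⟩ := Submodule.Quotient.mk_surjective K q
      rw [← Submodule.Quotient.mk_smul, Submodule.Quotient.mk_eq_zero] at h
      have hlVc : ((c • l : ↥L) : V) ∈ Vc := h
      have hcl : (c : ℚ) • (l : V) ∈ Vc := by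
        rw [Int.cast_smul_eq_zsmul]
        exact_mod_cast hlVc
      have : (l : V) ∈ Vc := by
        have := Vc.smul_mem ((c : ℚ))⁻¹ hcl
        rwa [smul_smul, inv_mul_cancel₀ (by exact_mod_cast hc), one_smul] at this
      rw [Submodule.Quotient.mk_eq_zero]
      exact this
  haveI : Module.Finite ℤ (↥L ⧸ K) := Module.Finite.quotient ℤ K
  haveI : Module.Free ℤ (↥L ⧸ K) := Module.free_of_finite_type_torsion_free'
  obtain ⟨s, hs⟩ := Module.projective_lifting_property K.mkQ LinearMap.id
    (Submodule.mkQ_surjective K)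
  set r : ↥L →ₗ[ℤ] ↥L := LinearMap.id - s ∘ₗ K.mkQ with hrdef
  have hrK : ∀ l : ↥L, r l ∈ K := by
    intro l
    have h1 : K.mkQ (r l) = 0 := by
      have h2 : K.mkQ (s (K.mkQ l)) = K.mkQ l := LinearMap.congr_fun hs (K.mkQ l)
      rw [hrdef]
      simp only [LinearMap.sub_apply, LinearMap.comp_apply, LinearMap.id_apply, map_sub]
      rw [h2, sub_self]
    rwa [← LinearMap.mem_ker, Submodule.ker_mkQ] at h1
  have hrid : ∀ l : ↥L, (l : V) ∈ coSet B L G → r l = l := by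
    intro l hl
    have h0 : K.mkQ l = 0 := by
      rw [Submodule.mkQ_apply, Submodule.Quotient.mk_eq_zero]
      exact (hK l).mpr hl
    simp [hrdef, h0]
  -- basis of L gives a ℚ-basis of V
  set bL := Module.Free.chooseBasis ℤ ↥L with hbL
  set ι := Module.Free.ChooseBasisIndex ℤ ↥L with hι
  have hli : LinearIndependent ℚ (fun i : ι => ((bL i : ↥L) : V)) := by
    rw [← LinearIndependent.iff_fractionRing ℤ ℚ]
    exact bL.linearIndependent.map' L.subtype (Submodule.ker_subtype L)
  have hsp : ⊤ ≤ Submodule.span ℚ (Set.range fun i : ι => ((bL i : ↥L) : V)) := by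
    rw [← hspan]
    apply Submodule.span_le.mpr
    intro z hz
    have h1 : (⟨z, hz⟩ : ↥L) ∈ Submodule.span ℤ (Set.range bL) := by
      rw [bL.span_eq]; trivial
    have h2 : z ∈ Submodule.map L.subtype (Submodule.span ℤ (Set.range bL)) :=
      ⟨⟨z, hz⟩, h1, rfl⟩
    rw [Submodule.map_span] at h2
    have h3 : L.subtype '' Set.range bL = Set.range fun i : ι => ((bL i : ↥L) : V) := by
      ext w
      simp [Set.mem_image, Set.mem_range]
    rw [h3] at h2
    have h4 : Submodule.span ℤ (Set.range fun i : ι => ((bL i : ↥L) : V)) ≤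
        (Submodule.span ℚ (Set.range fun i : ι => ((bL i : ↥L) : V))).restrictScalars ℤ := by
      apply Submodule.span_le.mpr
      intro u hu
      exact Submodule.subset_span hu
    exact h4 h2
  set bq : Module.Basis ι ℚ V := Module.Basis.mk hli hsp with hbq
  set ψ : ↥L →ₗ[ℤ] ℚ := ((B x).restrictScalars ℤ) ∘ₗ (L.subtype ∘ₗ r) with hψ
  set Ψ : V →ₗ[ℚ] ℚ := bq.constr ℚ (fun i => ψ (bL i)) with hΨ
  have hΨψ : ∀ l : ↥L, Ψ (l : V) = ψ l := by
    have key : (Ψ.restrictScalars ℤ) ∘ₗ L.subtype = ψ := by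
      apply bL.ext
      intro i
      have h5 : ((bL i : ↥L) : V) = bq i := (Module.Basis.mk_apply hli hsp i).symm
      simp only [LinearMap.comp_apply, LinearMap.restrictScalars_apply, Submodule.coe_subtype]
      rw [h5, hΨ, Module.Basis.constr_basis]
    intro l
    exact LinearMap.congr_fun key l
  haveI : FiniteDimensional ℚ V := Module.Finite.of_basis bq
  have hinj : Function.Injective (B : V →ₗ[ℚ] V →ₗ[ℚ] ℚ) := by
    intro a b hab
    have h6 : ∀ y, B (a - b) y = 0 := by
      intro y
      rw [map_sub, LinearMap.sub_apply]
      rw [show B a = B b from hab]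
      ring
    exact sub_eq_zero.mp (hnondeg _ h6)
  have hsurj : Function.Surjective (B : V →ₗ[ℚ] V →ₗ[ℚ] ℚ) :=
    (LinearMap.injective_iff_surjective_of_finrank_eq_finrank
      Subspace.dual_finrank_eq.symm).mp hinj
  obtain ⟨y, hy⟩ := hsurj Ψ
  have hyval : ∀ v : V, B y v = Ψ v := fun v => by rw [hy]
  refine ⟨y, ?_, ?_⟩
  · intro l hl
    obtain ⟨n, hn⟩ := hx.2 ((r ⟨l, hl⟩ : ↥L) : V) ((hK _).mp (hrK ⟨l, hl⟩))
    refine ⟨n, ?_⟩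
    rw [hyval l, show (l : V) = ((⟨l, hl⟩ : ↥L) : V) from rfl, hΨψ]
    exact hn
  · have h1 : y - avgG G y ∈ Vc := sub_avg_mem_spanCo B L G hsymm hspan hGisom y
    have h7 : x - (y - avgG G y) = 0 := by
      apply vanish_spanCo B L G hsymm hnondeg hspan hGisom (Submodule.sub_mem _ hx.1 h1)
      intro c hc
      have hBavg : B (avgG G y) c = 0 := by
        rw [hsymm]
        exact coSet_perp_spanFix B L G hc _ (avg_mem_spanFix L G hspan y)
      have hByc : B y c = B x c := by
        rw [hyval c, show c = ((⟨c, hc.1⟩ : ↥L) : V) from rfl, hΨψ]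
        simp only [hψ, LinearMap.comp_apply, LinearMap.restrictScalars_apply,
          Submodule.coe_subtype]
        rw [hrid ⟨c, hc.1⟩ hc]
      rw [map_sub, LinearMap.sub_apply, map_sub, LinearMap.sub_apply, hByc, hBavg]
      ring
    have := sub_eq_zero.mp h7
    exact this
end dualproj

section philayer
variable {V : Type*} [AddCommGroup V] [Module ℚ V]
variable (B : V →ₗ[ℚ] V →ₗ[ℚ] ℚ) (L : Submodule ℤ V) (G : Subgroup (V ≃ₗ[ℚ] V))
variable [Fintype G]

lemma spanZ_coSet_le_L : Submodule.span ℤ (coSet B L G) ≤ L :=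
  Submodule.span_le.mpr fun c hc => hc.1

/-- An isometry fixing everything orthogonal to `coSet` and stable on `coDualSet`
is stable on the full dual lattice. -/
lemma phi_stable_dual (hsymm : ∀ x y, B x y = B y x)
    (hspan : Submodule.span ℚ (L : Set V) = ⊤)
    (hGisom : ∀ g ∈ G, ∀ x y, B ((g : V ≃ₗ[ℚ] V) x) ((g : V ≃ₗ[ℚ] V) y) = B x y)
    (φ : V ≃ₗ[ℚ] V)
    (hfixv : ∀ v, (∀ c ∈ coSet B L G, B v c = 0) → φ v = v)
    (hst : ∀ x ∈ coDualSet B L G, φ x - x ∈ Submodule.span ℤ (coSet B L G)) :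
    ∀ x ∈ dualSet B L, φ x - x ∈ L := by
  intro x hxd
  have havgperp : ∀ c ∈ coSet B L G, B (avgG G x) c = 0 := fun c hc => by
    rw [hsymm]
    exact coSet_perp_spanFix B L G hc _ (avg_mem_spanFix L G hspan x)
  have hfixavg : φ (avgG G x) = avgG G x := hfixv _ havgperp
  have hxm : x - avgG G x ∈ coDualSet B L G := by
    refine ⟨sub_avg_mem_spanCo B L G hsymm hspan hGisom x, fun c hc => ?_⟩
    obtain ⟨n, hn⟩ := hxd c hc.1
    refine ⟨n, ?_⟩
    rw [map_sub, LinearMap.sub_apply, hn, havgperp c hc]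
    ring
  have h1 : φ x - x = φ (x - avgG G x) - (x - avgG G x) := by
    rw [map_sub, hfixavg]
    abel
  rw [h1]
  exact spanZ_coSet_le_L B L G (hst _ hxm)

end philayer


/-- for an even lattice `L` and a finite subgroup `G ≤ O^#(L)` of stable
isometries, `G` is stably saturated (it equals the pointwise stabilizer of `L^G` in
`O^#(L)`) iff the image of the restriction map `G → O(L_G)` is `O^#(L_G)`. -/
theorem stmt_5 {V : Type*} [AddCommGroup V] [Module ℚ V]
    (B : V →ₗ[ℚ] V →ₗ[ℚ] ℚ)
    (hsymm : ∀ x y, B x y = B y x)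
    (hnondeg : ∀ x, (∀ y, B x y = 0) → x = 0)
    (L : Submodule ℤ V) (hfg : L.FG)
    (hspan : Submodule.span ℚ (L : Set V) = ⊤)
    (hint : ∀ x ∈ L, ∀ y ∈ L, ∃ n : ℤ, B x y = (n : ℚ))
    (heven : ∀ x ∈ L, ∃ k : ℤ, B x x = 2 * (k : ℚ))
    (G : Subgroup (V ≃ₗ[ℚ] V)) (hGfin : Finite G)
    (hGisom : ∀ g ∈ G, ∀ x y, B ((g : V ≃ₗ[ℚ] V) x) ((g : V ≃ₗ[ℚ] V) y) = B x y)
    (hGL : ∀ g ∈ G, ∀ x ∈ L, (g : V ≃ₗ[ℚ] V) x ∈ L)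
    (hGstable : ∀ g ∈ G, ∀ x ∈ dualSet B L, (g : V ≃ₗ[ℚ] V) x - x ∈ L) :
    -- `G` is stably saturated, i.e. every stable isometry of `L` fixing `L^G`
    -- pointwise lies in `G` ...
    (∀ f : V ≃ₗ[ℚ] V,
        (∀ x y, B (f x) (f y) = B x y) →
        (∀ x ∈ L, f x ∈ L) → (∀ x ∈ L, f.symm x ∈ L) →
        (∀ x ∈ dualSet B L, f x - x ∈ L) →
        (∀ v ∈ fixSet L G, f v = v) → f ∈ G) ↔
    -- ... iff the image of `G → O(L_G)` equals `O^#(L_G)`: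
    ((∀ g ∈ G, ∀ x ∈ coDualSet B L G,
        (g : V ≃ₗ[ℚ] V) x - x ∈ Submodule.span ℤ (coSet B L G)) ∧
      (∀ φ : V ≃ₗ[ℚ] V,
        (∀ x y, B (φ x) (φ y) = B x y) →
        (∀ v, (∀ l ∈ coSet B L G, B v l = 0) → φ v = v) →
        (∀ x ∈ coSet B L G, φ x ∈ coSet B L G) →
        (∀ x ∈ coSet B L G, φ.symm x ∈ coSet B L G) →
        (∀ x ∈ coDualSet B L G, φ x - x ∈ Submodule.span ℤ (coSet B L G)) →
        ∃ g ∈ G, ∀ v ∈ coSet B L G, (g : V ≃ₗ[ℚ] V) v = φ v)) := by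
  haveI : Fintype ↥G := Fintype.ofFinite ↥G
  constructor
  · intro hsat
    constructor
    · -- G acts trivially on the discriminant of the coinvariant lattice
      intro g hg x hx
      obtain ⟨y, hyd, hxy⟩ := exists_dual_preimage B L G hsymm hnondeg hfg hspan hGisom hx
      have h2 : g y - y ∈ coSet B L G := by
        refine ⟨hGstable g hg y hyd, fun w hw => ?_⟩
        have h3 : B (g y) w = B y w := by
          conv_lhs => rw [← hw.2 g hg]
          exact hGisom g hg y w
        rw [map_sub, LinearMap.sub_apply, h3, sub_self]
      have h1 : g x - x = g y - y := by
        rw [hxy, map_sub, avgG_fixed G hg y]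
        abel
      rw [h1]
      exact Submodule.subset_span h2
    · -- every stable isometry of the coinvariant lattice comes from G
      intro φ hiso hfixv hC hCsymm hst
      refine ⟨φ, ?_, fun v _ => rfl⟩
      have hiso' : ∀ a b, B (φ.symm a) (φ.symm b) = B a b := fun a b => by
        rw [← hiso (φ.symm a) (φ.symm b), φ.apply_symm_apply, φ.apply_symm_apply]
      have hfixv' : ∀ v, (∀ c ∈ coSet B L G, B v c = 0) → φ.symm v = v := fun v hv => by
        conv_lhs => rw [← hfixv v hv]
        exact φ.symm_apply_apply v
      have hst' : ∀ x ∈ coDualSet B L G, φ.symm x - x ∈ Submodule.span ℤ (coSet B L G) := by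
        intro x hx
        have hmem : φ.symm x ∈ Submodule.span ℚ (coSet B L G) := by
          have hmaps : Submodule.span ℚ (coSet B L G) ≤
              Submodule.comap (φ.symm : V →ₗ[ℚ] V) (Submodule.span ℚ (coSet B L G)) :=
            Submodule.span_le.mpr (fun c hc => Submodule.subset_span (hCsymm c hc))
          exact hmaps hx.1
        have hsx : φ.symm x ∈ coDualSet B L G := by
          refine ⟨hmem, fun c hc => ?_⟩
          obtain ⟨n, hn⟩ := hx.2 (φ c) (hC c hc)
          refine ⟨n, ?_⟩
          rw [← hiso (φ.symm x) c, φ.apply_symm_apply]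
          exact hn
        have h9 := hst _ hsx
        have h10 : φ.symm x - x = -(φ (φ.symm x) - φ.symm x) := by
          rw [φ.apply_symm_apply]
          abel
        rw [h10]
        exact Submodule.neg_mem _ h9
      have hLdual : ∀ z ∈ L, z ∈ dualSet B L := fun z hz l hl => hint z hz l hl
      have hstL : ∀ z ∈ dualSet B L, φ z - z ∈ L :=
        phi_stable_dual B L G hsymm hspan hGisom φ hfixv hst
      have hstL' : ∀ z ∈ dualSet B L, φ.symm z - z ∈ L :=
        phi_stable_dual B L G hsymm hspan hGisom φ.symm hfixv' hst'
      refine hsat φ hiso ?_ ?_ hstL ?_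
      · intro z hz
        have h11 := hstL z (hLdual z hz)
        have h12 : φ z = z + (φ z - z) := by abel
        rw [h12]
        exact L.add_mem hz h11
      · intro z hz
        have h11 := hstL' z (hLdual z hz)
        have h12 : φ.symm z = z + (φ.symm z - z) := by abel
        rw [h12]
        exact L.add_mem hz h11
      · intro w hw
        exact hfixv w (fun c hc => by rw [hsymm]; exact hc.2 w hw)
  · rintro ⟨hA, hBsurj⟩ f hfiso hfL hfLsymm hfst hffix
    have hffix' : ∀ v ∈ Submodule.span ℚ (fixSet L G), f v = v := by
      intro v hv
      have := agree_on_span (f : V →ₗ[ℚ] V) LinearMap.id (fixSet L G)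
        (fun w hw => by simpa using hffix w hw) v hv
      simpa using this
    have hfC : ∀ c ∈ coSet B L G, f c ∈ coSet B L G := fun c hc => by
      refine ⟨hfL c hc.1, fun w hw => ?_⟩
      have h3 : B (f c) w = B c w := by
        conv_lhs => rw [← hffix w hw]
        exact hfiso c w
      rw [h3]
      exact hc.2 w hw
    have hfCsymm : ∀ c ∈ coSet B L G, f.symm c ∈ coSet B L G := fun c hc => by
      refine ⟨hfLsymm c hc.1, fun w hw => ?_⟩
      have h3 : B (f.symm c) w = B c w := by
        rw [← hfiso (f.symm c) w, f.apply_symm_apply, hffix w hw]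
      rw [h3]
      exact hc.2 w hw
    have hfperp : ∀ v, (∀ c ∈ coSet B L G, B v c = 0) → f v = v := by
      intro v hv
      have h1 : v = avgG G v := eq_avg_of_perp_coSet B L G hsymm hnondeg hspan hGisom hv
      rw [h1]
      exact hffix' _ (avg_mem_spanFix L G hspan v)
    have hfst' : ∀ x ∈ coDualSet B L G, f x - x ∈ Submodule.span ℤ (coSet B L G) := by
      intro x hx
      obtain ⟨y, hyd, hxy⟩ := exists_dual_preimage B L G hsymm hnondeg hfg hspan hGisom hx
      have h2 : f y - y ∈ coSet B L G := by
        refine ⟨hfst y hyd, fun w hw => ?_⟩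
        have h3 : B (f y) w = B y w := by
          conv_lhs => rw [← hffix w hw]
          exact hfiso y w
        rw [map_sub, LinearMap.sub_apply, h3, sub_self]
      have h1 : f x - x = f y - y := by
        rw [hxy, map_sub, hffix' _ (avg_mem_spanFix L G hspan y)]
        abel
      rw [h1]
      exact Submodule.subset_span h2
    obtain ⟨g, hg, hgf⟩ := hBsurj f hfiso hfperp hfC hfCsymm hfst'
    have hagree1 : ∀ v ∈ Submodule.span ℚ (coSet B L G), g v = f v := by
      intro v hv
      have := agree_on_span (g : V →ₗ[ℚ] V) (f : V →ₗ[ℚ] V) (coSet B L G)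
        (fun w hw => by simpa using hgf w hw) v hv
      simpa using this
    have hgfix' : ∀ v ∈ Submodule.span ℚ (fixSet L G), g v = v := by
      intro v hv
      have := agree_on_span (g : V →ₗ[ℚ] V) LinearMap.id (fixSet L G)
        (fun w hw => by simpa using hw.2 g hg) v hv
      simpa using this
    have hagree : ∀ v, f v = g v := by
      intro v
      have hd1 := avg_mem_spanFix L G hspan v
      have hd2 := sub_avg_mem_spanCo B L G hsymm hspan hGisom v
      have hv : v = avgG G v + (v - avgG G v) := by abel
      conv_lhs => rw [hv]
      conv_rhs => rw [hv]
      rw [map_add, map_add, hffix' _ hd1, hgfix' _ hd1, hagree1 _ hd2]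
    have hfg2 : f = g := LinearEquiv.ext hagree
    rw [hfg2]
    exact hg
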